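/- For each entry (i,j) ∈ ℕ × ℕ, one has (A₀(x)·A₂(y))_{i,j} = t·(A₂(y)·A₀(x))_{i,j} + (1−t)·(A₂(y))_{i,j} + xy(1−t)·(A₀(y))_{i,j}, where matrix products are well-defined entrywise since all matrices are banded (each row and column has at most two nonzero entries). -/

import Mathlib

noncomputable def matMul {R : Type*} [CommRing R] (M N : ℕ → ℕ → R) : ℕ → ℕ → R :=
  fun i j => ∑ᶠ k, M i k * N k j

def A0 {R : Type*} [CommRing R] (x : R) : ℕ → ℕ → R :=
  fun i j => if i = j then 1 else if i + 1 = j then x else 0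

def A2 {R : Type*} [CommRing R] (t x : R) : ℕ → ℕ → R :=
  fun i j => if i = j then x ^ 2 else if i = j + 1 then x * (1 - t ^ i) else 0

lemma finsum_pair' {R : Type*} [CommRing R] (f : ℕ → R) (a b : ℕ) (hab : a ≠ b)
    (h : ∀ k, k ≠ a → k ≠ b → f k = 0) : ∑ᶠ k, f k = f a + f b := by
  have hs : Function.support f ⊆ (({a, b} : Finset ℕ) : Set ℕ) := by
    intro k hk
    simp only [Function.mem_support] at hk
    by_contra hc
    simp only [Finset.coe_insert, Finset.coe_singleton, Set.mem_insert_iff,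
      Set.mem_singleton_iff, not_or] at hc
    exact hk (h k hc.1 hc.2)
  rw [finsum_eq_sum_of_support_subset f hs, Finset.sum_pair hab]

lemma finsum_single' {R : Type*} [CommRing R] (f : ℕ → R) (a : ℕ)
    (h : ∀ k, k ≠ a → f k = 0) : ∑ᶠ k, f k = f a := by
  have hs : Function.support f ⊆ (({a} : Finset ℕ) : Set ℕ) := by
    intro k hk
    simp only [Function.mem_support] at hk
    by_contra hc
    simp only [Finset.coe_singleton, Set.mem_singleton_iff] at hc
    exact hk (h k hc)
  rw [finsum_eq_sum_of_support_subset f hs, Finset.sum_singleton]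

theorem stmt0 {R : Type*} [CommRing R] (t x y : R) (i j : ℕ) :
    matMul (A0 x) (A2 t y) i j =
      t * matMul (A2 t y) (A0 x) i j + (1 - t) * A2 t y i j + x * y * (1 - t) * A0 y i j := by
  have hL : matMul (A0 x) (A2 t y) i j = A2 t y i j + x * A2 t y (i + 1) j := by
    unfold matMul
    rw [finsum_pair' _ i (i + 1) (by omega)
      (by
        intro k h1 h2
        have h1' : ¬ (i = k) := fun h => h1 h.symm
        have h2' : ¬ (i + 1 = k) := fun h => h2 h.symm
        simp [A0, h1', h2'])]
    simp [A0]
  rw [hL]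
  match i with
  | 0 =>
    have hR : matMul (A2 t y) (A0 x) 0 j = A2 t y 0 0 * A0 x 0 j := by
      unfold matMul
      rw [finsum_single' _ 0]
      intro k hk
      simp [A2, Ne.symm hk]
    rw [hR]
    simp only [A0, A2]
    split_ifs <;> first | (exfalso; omega) | ring
  | n + 1 =>
    have hR : matMul (A2 t y) (A0 x) (n + 1) j =
        A2 t y (n + 1) (n + 1) * A0 x (n + 1) j + A2 t y (n + 1) n * A0 x n j := by
      unfold matMul
      rw [finsum_pair' _ (n + 1) n (by omega)]
      intro k h1 h2
      have : ¬ (n + 1 = k) := fun h => h1 h.symm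
      have : ¬ (n + 1 = k + 1) := by omega
      have : ¬ (n = k) := fun h => h2 h.symm
      simp [A2, *]
    rw [hR]
    simp only [A0, A2]
    split_ifs <;> first | (exfalso; omega) | ring
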